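/- Let d, Nα, Nβ ≥ 1, N = Nα + Nβ, let X_1,…,X_N ⊆ ℝ^d be open sets, and let u_1,…,u_N with u_i : X_i → ℝ satisfy the splitting inequality for the cost c. Suppose equality u_1(x_1⁰) + Σ_{i=2}^{Nα} u_i(x_i) + Σ_{j=1}^{Nβ} u_{Nα+j}(y_j) = c(x_1⁰, x_2,…,x_{Nα}, y_1,…,y_{Nβ}) holds at a point (x_1⁰, x_2,…,x_{Nα}, y_1,…,y_{Nβ}) ∈ X_1×…×X_N. Then: (i) if u_1 is differentiable at x_1⁰, its gradient is ∇u_1(x_1⁰) = Σ_{j=1}^{Nβ} y_j*; (ii) if, for some p ∈ {1,…,Nβ}, u_{Nα+p} is differentiable at y_p, then ∇u_{Nα+p}(y_p) = Σ_{i=1}^{Nα} x_i*, where x* := (−2x¹, x²,…,x^d). -/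

import Mathlib

open MeasureTheory RealInnerProductSpace

noncomputable section

/-- The "starred" vector `y* = (-2 y¹, y², …, y^d)`. -/
def ystar {d : ℕ} (hd : 0 < d) (y : EuclideanSpace ℝ (Fin d)) : EuclideanSpace ℝ (Fin d) :=
  y - (3 * y ⟨0, hd⟩) • EuclideanSpace.single (⟨0, hd⟩ : Fin d) (1 : ℝ)

/-- The cost `c(x_1,…,x_Nα,y_1,…,y_Nβ) = ∑_i ∑_j x_i · y_j*`, in block coordinates. -/
def costxy {d Nα Nβ : ℕ} (hd : 0 < d)
    (x : Fin Nα → EuclideanSpace ℝ (Fin d)) (y : Fin Nβ → EuclideanSpace ℝ (Fin d)) : ℝ :=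
  ∑ i : Fin Nα, ∑ j : Fin Nβ, ⟪x i, ystar hd (y j)⟫

lemma inner_ystar_comm {d : ℕ} (hd : 0 < d) (a b : EuclideanSpace ℝ (Fin d)) :
    ⟪a, ystar hd b⟫ = ⟪ystar hd a, b⟫ := by
  simp [ystar, inner_sub_right, inner_sub_left, inner_smul_right, inner_smul_left,
    EuclideanSpace.inner_single_right, EuclideanSpace.inner_single_left, real_inner_comm a b]
  ring

lemma grad_key {d : ℕ} {u : EuclideanSpace ℝ (Fin d) → ℝ}
    {v g x₀ : EuclideanSpace ℝ (Fin d)}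
    (hmax : ∀ᶠ z in nhds x₀, u z - ⟪z, v⟫ ≤ u x₀ - ⟪x₀, v⟫)
    (hg : HasGradientAt u g x₀) : g = v := by
  have h1 : HasFDerivAt (fun z : EuclideanSpace ℝ (Fin d) => ⟪z, v⟫)
      (InnerProductSpace.toDual ℝ (EuclideanSpace ℝ (Fin d)) v : _ →L[ℝ] ℝ) x₀ := by
    have := (InnerProductSpace.toDual ℝ (EuclideanSpace ℝ (Fin d)) v :
        EuclideanSpace ℝ (Fin d) →L[ℝ] ℝ).hasFDerivAt (x := x₀)
    convert this using 2 with z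
    simp [InnerProductSpace.toDual_apply_apply, real_inner_comm]
  have h2 := (hg.hasFDerivAt).sub h1
  have hmax' : IsLocalMax (fun z => u z - ⟪z, v⟫) x₀ := hmax
  have h0 := hmax'.hasFDerivAt_eq_zero h2
  have h3 : InnerProductSpace.toDual ℝ (EuclideanSpace ℝ (Fin d)) (g - v)
      = InnerProductSpace.toDual ℝ (EuclideanSpace ℝ (Fin d)) 0 := by
    rw [map_sub, map_zero]; exact h0
  have h4 := (InnerProductSpace.toDual ℝ (EuclideanSpace ℝ (Fin d))).injective h3
  exact sub_eq_zero.mp h4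

theorem stmt_8 {d Nα Nβ : ℕ} (hd : 0 < d) (hNα : 0 < Nα) (hNβ : 0 < Nβ)
    (Xa : Fin Nα → Set (EuclideanSpace ℝ (Fin d)))
    (Xb : Fin Nβ → Set (EuclideanSpace ℝ (Fin d)))
    (hXa : ∀ i, IsOpen (Xa i)) (hXb : ∀ j, IsOpen (Xb j))
    (ua : Fin Nα → EuclideanSpace ℝ (Fin d) → ℝ)
    (ub : Fin Nβ → EuclideanSpace ℝ (Fin d) → ℝ)
    (hsplit : ∀ (x : Fin Nα → EuclideanSpace ℝ (Fin d))
        (y : Fin Nβ → EuclideanSpace ℝ (Fin d)),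
        (∀ i, x i ∈ Xa i) → (∀ j, y j ∈ Xb j) →
        ∑ i, ua i (x i) + ∑ j, ub j (y j) ≤ costxy hd x y)
    (x : Fin Nα → EuclideanSpace ℝ (Fin d)) (y : Fin Nβ → EuclideanSpace ℝ (Fin d))
    (hx : ∀ i, x i ∈ Xa i) (hy : ∀ j, y j ∈ Xb j)
    (heq : ∑ i, ua i (x i) + ∑ j, ub j (y j) = costxy hd x y) :
    (∀ g : EuclideanSpace ℝ (Fin d),
      HasGradientAt (ua ⟨0, hNα⟩) g (x ⟨0, hNα⟩) → g = ∑ j, ystar hd (y j)) ∧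
    (∀ p : Fin Nβ, ∀ g : EuclideanSpace ℝ (Fin d),
      HasGradientAt (ub p) g (y p) → g = ∑ i, ystar hd (x i)) := by
  constructor
  · intro g hg
    set a : Fin Nα := ⟨0, hNα⟩ with ha
    set v := ∑ j, ystar hd (y j) with hv
    refine grad_key ?_ hg
    filter_upwards [(hXa a).mem_nhds (hx a)] with z hz
    have hx' : ∀ i, Function.update x a z i ∈ Xa i := by
      intro i
      rcases eq_or_ne i a with rfl | hne
      · simpa using hz
      · simpa [Function.update_of_ne hne] using hx i
    have hsp := hsplit (Function.update x a z) y hx' hy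
    have hcost : costxy hd (Function.update x a z) y - costxy hd x y
        = ⟪z, v⟫ - ⟪x a, v⟫ := by
      unfold costxy
      rw [← Finset.sum_sub_distrib, Finset.sum_eq_single a]
      · simp [hv, inner_sum, Finset.sum_sub_distrib]
      · intro i _ hne; simp [Function.update_of_ne hne]
      · simp
    have hsum : (∑ i, ua i (Function.update x a z i)) - ∑ i, ua i (x i)
        = ua a z - ua a (x a) := by
      rw [← Finset.sum_sub_distrib, Finset.sum_eq_single a]
      · simp
      · intro i _ hne; simp [Function.update_of_ne hne]
      · simp
    linarith
  · intro p g hg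
    set v := ∑ i, ystar hd (x i) with hv
    refine grad_key ?_ hg
    filter_upwards [(hXb p).mem_nhds (hy p)] with z hz
    have hy' : ∀ j, Function.update y p z j ∈ Xb j := by
      intro j
      rcases eq_or_ne j p with rfl | hne
      · simpa using hz
      · simpa [Function.update_of_ne hne] using hy j
    have hsp := hsplit x (Function.update y p z) hx hy'
    have hc : ∀ y' : Fin Nβ → EuclideanSpace ℝ (Fin d),
        costxy hd x y' = ∑ j, ∑ i, ⟪x i, ystar hd (y' j)⟫ := fun y' => Finset.sum_comm
    have hcost : costxy hd x (Function.update y p z) - costxy hd x y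
        = ⟪z, v⟫ - ⟪y p, v⟫ := by
      rw [hc, hc, ← Finset.sum_sub_distrib, Finset.sum_eq_single p]
      · simp only [Function.update_self, hv, inner_sum, ← Finset.sum_sub_distrib]
        refine Finset.sum_congr rfl fun i _ => ?_
        rw [inner_ystar_comm hd (x i) z, inner_ystar_comm hd (x i) (y p),
          real_inner_comm (ystar hd (x i)) z, real_inner_comm (ystar hd (x i)) (y p)]
      · intro j _ hne; simp [Function.update_of_ne hne]
      · simp
    have hsum : (∑ j, ub j (Function.update y p z j)) - ∑ j, ub j (y j)
        = ub p z - ub p (y p) := by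
      rw [← Finset.sum_sub_distrib, Finset.sum_eq_single p]
      · simp
      · intro j _ hne; simp [Function.update_of_ne hne]
      · simp
    linarith
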